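/- Let L : C → C be a localization functor admitting a left adjoint Γ. Then: a morphism φ in C is inverted by Γ if and only if it is inverted by L. -/
import Mathlib


open CategoryTheory

/-- **Proposition (leftadjoint, (1) ⟹ (3)).** Let `L : C ⥤ C` be a localization functor
admitting a left adjoint `Γ`.  Then a morphism `φ` of `C` is inverted by `Γ` if and only
if it is inverted by `L`. -/
theorem stmt8 {C : Type*} [Category C] (L Γ : C ⥤ C) (η : 𝟭 C ⟶ L)
    (hloc : ∀ X : C, IsIso (L.map (η.app X)) ∧ L.map (η.app X) = η.app (L.obj X))
    (adj : Γ ⊣ L) :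
    ∀ {X Y : C} (φ : X ⟶ Y), IsIso (Γ.map φ) ↔ IsIso (L.map φ) := by
  intro X Y φ
  haveI hη : ∀ A : C, IsIso (η.app (L.obj A)) := fun A => (hloc A).2 ▸ (hloc A).1
  -- the key equivalence: precomposition with `η.app A` is a bijection into local objects
  have hnat : ∀ {A B : C} (f : A ⟶ B), η.app A ≫ L.map f = f ≫ η.app B := by
    intro A B f
    simpa using (η.naturality f).symm
  let e : ∀ (A Z : C), (L.obj A ⟶ L.obj Z) ≃ (A ⟶ L.obj Z) := fun A Z =>
    { toFun := fun f => η.app A ≫ f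
      invFun := fun h => L.map h ≫ inv (η.app (L.obj Z))
      left_inv := by
        intro f
        show L.map (η.app A ≫ f) ≫ inv (η.app (L.obj Z)) = f
        rw [L.map_comp, (hloc A).2, hnat f, Category.assoc,
          IsIso.hom_inv_id, Category.comp_id]
      right_inv := by
        intro h
        show η.app A ≫ L.map h ≫ inv (η.app (L.obj Z)) = h
        rw [← Category.assoc, hnat h, Category.assoc, IsIso.hom_inv_id, Category.comp_id] }
  -- commutation: φ ≫ (e Y Z f) = e X Z (L.map φ ≫ f)
  have hcomm : ∀ (Z : C) (f : L.obj Y ⟶ L.obj Z),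
      φ ≫ (e Y Z) f = (e X Z) (L.map φ ≫ f) := by
    intro Z f
    show φ ≫ η.app Y ≫ f = η.app X ≫ L.map φ ≫ f
    rw [← Category.assoc, ← hnat φ, Category.assoc]

  -- the middle condition
  have hmid : ∀ Z : C, (Function.Bijective (fun g : Y ⟶ L.obj Z => φ ≫ g)) ↔
      Function.Bijective (fun f : L.obj Y ⟶ L.obj Z => L.map φ ≫ f) := by
    intro Z
    have hfe : (fun g : Y ⟶ L.obj Z => φ ≫ g) =
        (e X Z) ∘ (fun f : L.obj Y ⟶ L.obj Z => L.map φ ≫ f) ∘ (e Y Z).symm := by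
      funext g
      simp only [Function.comp_apply]
      rw [← hcomm Z ((e Y Z).symm g), Equiv.apply_symm_apply]
    constructor
    · intro h
      have h2 : (fun f : L.obj Y ⟶ L.obj Z => L.map φ ≫ f) =
          (e X Z).symm ∘ (fun g : Y ⟶ L.obj Z => φ ≫ g) ∘ (e Y Z) := by
        funext f
        simp only [Function.comp_apply]
        rw [hcomm Z f, Equiv.symm_apply_apply]
      rw [h2]
      exact ((e X Z).symm.bijective.comp h).comp (e Y Z).bijective
    · intro h
      rw [hfe]
      exact ((e X Z).bijective.comp h).comp (e Y Z).symm.bijective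
  constructor
  · -- Γ inverts φ → L inverts φ
    intro hΓ
    -- from Γφ iso, precomposition bijective on all targets, hence on local targets via adjunction
    have hb : ∀ Z : C, Function.Bijective (fun g : Y ⟶ L.obj Z => φ ≫ g) := by
      intro Z
      have hc := (isIso_iff_coyoneda_map_bijective (Γ.map φ)).1 hΓ Z
      have he : (fun g : Y ⟶ L.obj Z => φ ≫ g) =
          (adj.homEquiv X Z) ∘ (fun u : Γ.obj Y ⟶ Z => Γ.map φ ≫ u) ∘ (adj.homEquiv Y Z).symm := by
        funext g
        simp only [Function.comp_apply]
        rw [adj.homEquiv_naturality_left, Equiv.apply_symm_apply]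
      rw [he]
      exact ((adj.homEquiv X Z).bijective.comp hc).comp (adj.homEquiv Y Z).symm.bijective
    -- hence L.map φ has an inverse
    obtain ⟨ψ, hψ⟩ := ((hmid X).1 (hb X)).2 (𝟙 (L.obj X))
    have hψ' : L.map φ ≫ ψ = 𝟙 (L.obj X) := hψ
    refine ⟨ψ, hψ', ((hmid Y).1 (hb Y)).1 ?_⟩
    show L.map φ ≫ ψ ≫ L.map φ = L.map φ ≫ 𝟙 (L.obj Y)
    rw [← Category.assoc, hψ', Category.id_comp, Category.comp_id]
  · -- L inverts φ → Γ inverts φ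
    intro hL
    apply isIso_of_coyoneda_map_bijective
    intro T
    -- precomposition with Γ.map φ on Hom(-, T): conjugate through the adjunction
    have he : (fun u : Γ.obj Y ⟶ T => Γ.map φ ≫ u) =
        (adj.homEquiv X T).symm ∘ (fun g : Y ⟶ L.obj T => φ ≫ g) ∘ (adj.homEquiv Y T) := by
      funext u
      simp only [Function.comp_apply]
      rw [← adj.homEquiv_naturality_left, Equiv.symm_apply_apply]
    rw [he]
    have hLb : Function.Bijective (fun f : L.obj Y ⟶ L.obj T => L.map φ ≫ f) :=
      (isIso_iff_coyoneda_map_bijective (L.map φ)).1 hL (L.obj T)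
    exact (((adj.homEquiv X T).symm.bijective.comp ((hmid T).2 hLb))).comp
      (adj.homEquiv Y T).bijective
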